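/- For planar binary trees x of degree m and y of degree n, the map (a,b) ↦ a/b is an order isomorphism from the product of Tamari intervals [0̂, x] × [0̂, y] onto the Tamari interval [0̂, x/y] in the Tamari poset of degree m+n, where 0̂ denotes the minimum element (left comb). -/

import Mathlib

/-- Planar binary trees: a leaf `∘` or an ordered pair of planar binary trees. -/
inductive PBT : Type
  | leaf : PBT
  | node : PBT → PBT → PBT
deriving DecidableEq

namespace PBT

/-- The degree: the number of internal vertices. -/
def deg : PBT → ℕ
  | leaf => 0
  | node l r => deg l + deg r + 1

/-- The over product `x/y`: graft the root of `x` onto the leftmost leaf of `y`. -/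
def overProd (x : PBT) : PBT → PBT
  | leaf => x
  | node l r => node (overProd x l) r

/-- The under product `x\y`: graft the root of `y` onto the rightmost leaf of `x`. -/
def under : PBT → PBT → PBT
  | leaf, y => y
  | node l r, y => node l (under r y)

/-- Left-right reversal: swap the two subtrees at every internal vertex. -/
def rev : PBT → PBT
  | leaf => leaf
  | node l r => node (rev r) (rev l)

/-- `move x y` : `y` is obtained from `x` by one elementary Tamari move,
replacing a subtree `(a (b c))` by `((a b) c)` (a right rotation, going down). -/
inductive move : PBT → PBT → Prop
  | rot (a b c : PBT) : move (node a (node b c)) (node (node a b) c)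
  | left {a a' : PBT} (b : PBT) : move a a' → move (node a b) (node a' b)
  | right (a : PBT) {b b' : PBT} : move b b' → move (node a b) (node a b')

/-- The Tamari order: `x ≤ y` iff `x` is obtained from `y` by a sequence of
elementary moves. -/
def tle (x y : PBT) : Prop := Relation.ReflTransGen move y x

/-- The left comb of degree `n`. -/
def leftComb : ℕ → PBT
  | 0 => leaf
  | n+1 => node (leftComb n) leaf

/-- The right comb of degree `n`. -/
def rightComb : ℕ → PBT
  | 0 => leaf
  | n+1 => node leaf (rightComb n)

end PBT

namespace PBT

theorem move_deg {x y : PBT} (h : move x y) : y.deg = x.deg := by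
  induction h with
  | rot a b c => simp [deg]; ring
  | left b _ ih => simp [deg, ih]
  | right a _ ih => simp [deg, ih]

theorem tle_deg {x y : PBT} (h : tle x y) : x.deg = y.deg := by
  induction h with
  | refl => rfl
  | tail _ h2 ih => rw [move_deg h2]; exact ih

theorem over_deg (a b : PBT) : (overProd a b).deg = a.deg + b.deg := by
  induction b with
  | leaf => simp [overProd, deg]
  | node l r ihl ihr => simp [overProd, deg, ihl]; ring

theorem move_over_left {a a' : PBT} (b : PBT) (h : move a a') :
    move (overProd a b) (overProd a' b) := by
  induction b with
  | leaf => simpa [overProd]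
  | node l r ihl ihr => exact move.left r ihl

theorem move_over_right (a : PBT) {b b' : PBT} (h : move b b') :
    move (overProd a b) (overProd a b') := by
  induction h with
  | rot p q r =>
      simp only [overProd]
      exact move.rot (overProd a p) q r
  | left q h ih =>
      simp only [overProd]
      exact move.left q ih
  | right p h ih =>
      simp only [overProd]
      exact move.right _ h

theorem move_over_inv {a : PBT} : ∀ {b z : PBT}, move (overProd a b) z →
    (∃ a', z = overProd a' b ∧ move a a') ∨ (∃ b', z = overProd a b' ∧ move b b')
  | leaf, z, h => Or.inl ⟨z, rfl, h⟩
  | node l r, z, h => by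
    simp only [overProd] at h
    cases h with
    | rot p q s =>
      exact Or.inr ⟨node (node l q) s, by simp [overProd], move.rot l q s⟩
    | left _ h' =>
      rcases move_over_inv h' with ⟨a', rfl, ha⟩ | ⟨l', rfl, hl⟩
      · exact Or.inl ⟨a', by simp [overProd], ha⟩
      · exact Or.inr ⟨node l' r, by simp [overProd], move.left r hl⟩
    | right _ h' =>
      exact Or.inr ⟨node l _, by simp [overProd], move.right l h'⟩

theorem over_inj : ∀ {b b' a a' : PBT}, overProd a b = overProd a' b' → a.deg = a'.deg →
    a = a' ∧ b = b'
  | leaf, leaf, a, a', h, _ => ⟨h, rfl⟩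
  | leaf, node l' r', a, a', h, hd => by
    simp only [overProd] at h
    subst h
    simp [deg, over_deg] at hd
    omega
  | node l r, leaf, a, a', h, hd => by
    simp only [overProd] at h
    subst h
    simp [deg, over_deg] at hd
    omega
  | node l r, node l' r', a, a', h, hd => by
    simp only [overProd, node.injEq] at h
    obtain ⟨h1, rfl⟩ := h
    obtain ⟨rfl, rfl⟩ := over_inj h1 hd
    exact ⟨rfl, rfl⟩

theorem tle_over_inv {x y z : PBT} (h : Relation.ReflTransGen move (overProd x y) z) :
    ∃ a b, z = overProd a b ∧ a.deg = x.deg ∧ tle a x ∧ tle b y := by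
  induction h with
  | refl => exact ⟨x, y, rfl, rfl, .refl, .refl⟩
  | tail h1 h2 ih =>
    obtain ⟨a, b, rfl, hd, ha, hb⟩ := ih
    rcases move_over_inv h2 with ⟨a', rfl, hm⟩ | ⟨b', rfl, hm⟩
    · exact ⟨a', b, rfl, by rw [move_deg hm, hd], Relation.ReflTransGen.tail ha hm, hb⟩
    · exact ⟨a, b', rfl, hd, ha, Relation.ReflTransGen.tail hb hm⟩

theorem tle_over {a a' b b' : PBT} (ha : tle a a') (hb : tle b b') :
    tle (overProd a b) (overProd a' b') := by
  unfold tle at *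
  exact (Relation.ReflTransGen.lift (fun t => overProd t b')
      (fun _ _ h => move_over_left b' h) _ _ ha).trans
    (Relation.ReflTransGen.lift (fun t => overProd a t)
      (fun _ _ h => move_over_right a h) _ _ hb)

end PBT

/-- The map `(a, b) ↦ a/b` is an order isomorphism from the product of Tamari
intervals `[0̂, x] × [0̂, y]` onto the Tamari interval `[0̂, x/y]`: it is
order-reflecting in both directions, and every `z ≤ x/y` is uniquely of the
form `a/b` with `a ≤ x` and `b ≤ y`. -/
theorem stmt9 (m n : ℕ) (x y : PBT) (hx : x.deg = m) (hy : y.deg = n) :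
    (∀ a b a' b' : PBT, PBT.tle a x → PBT.tle b y → PBT.tle a' x → PBT.tle b' y →
      (PBT.tle (a.overProd b) (a'.overProd b') ↔ PBT.tle a a' ∧ PBT.tle b b')) ∧
    (∀ z : PBT, PBT.tle z (x.overProd y) →
      ∃! p : PBT × PBT, PBT.tle p.1 x ∧ PBT.tle p.2 y ∧ z = p.1.overProd p.2) := by
  constructor
  · intro a b a' b' hax hby hax' hby'
    constructor
    · intro h
      obtain ⟨a2, b2, heq, hd, ha2, hb2⟩ := PBT.tle_over_inv h
      have hda : a.deg = a2.deg := by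
        rw [hd, PBT.tle_deg hax, ← PBT.tle_deg hax']
      obtain ⟨rfl, rfl⟩ := PBT.over_inj heq hda
      exact ⟨ha2, hb2⟩
    · intro ⟨h1, h2⟩
      exact PBT.tle_over h1 h2
  · intro z hz
    obtain ⟨a, b, rfl, hd, ha, hb⟩ := PBT.tle_over_inv hz
    refine ⟨(a, b), ⟨ha, hb, rfl⟩, ?_⟩
    rintro ⟨a', b'⟩ ⟨ha', hb', heq⟩
    have hda : a'.deg = a.deg := by
      rw [PBT.tle_deg ha', ← PBT.tle_deg ha]
    obtain ⟨rfl, rfl⟩ := PBT.over_inj heq.symm hda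
    rfl
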